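/- Let 1 < p < 2 and let φ and B be as above. Then for all x,z > 0 with s = x^{1-p}z, B_{xx}(x,z) = x^{-p} z² φ'(s)/φ(s)², B_{zz}(x,z) = x^{2-p} φ'(s), and the discriminant identity B_{xx}(x,z)·B_{zz}(x,z) = (|B_{xz}(x,z)| + 1)² holds. -/

import Mathlib

set_option maxHeartbeats 1000000

noncomputable def B (p : ℝ) (φ : ℝ → ℝ) (x z : ℝ) : ℝ :=
  x * z * ((p - 1) / p * φ (x ^ (1 - p) * z) + (2 - p) / (p * (p - 1))
    + 1 / (p * (p - 1) * φ (x ^ (1 - p) * z)))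

lemma derivX (p : ℝ) (hp1 : 1 < p) (hp2 : p < 2) (φ : ℝ → ℝ)
    (hφpos : ∀ s, 0 < s → 0 < φ s)
    (hφ' : ∀ s, 0 < s →
      HasDerivAt φ (φ s * (1 + φ s) / (s * (1 + (p - 1) * φ s))) s)
    (z : ℝ) (hz : 0 < z) (x : ℝ) (hx : 0 < x) :
    HasDerivAt (fun t => B p φ t z)
      (z * ((2 - p) * φ (x ^ (1 - p) * z) + 1) / ((p - 1) * φ (x ^ (1 - p) * z))) x := by
  have hs : 0 < x ^ (1 - p) * z := mul_pos (Real.rpow_pos_of_pos hx _) hz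
  set s : ℝ := x ^ (1 - p) * z with hsdef
  have hψ : 0 < φ s := hφpos s hs
  have hd := hφ' s hs
  have hp0 : p ≠ 0 := by linarith
  have hp1' : p - 1 ≠ 0 := by linarith
  have hden : 0 < 1 + (p - 1) * φ s := by nlinarith [hψ]
  have hsx : HasDerivAt (fun t : ℝ => t ^ (1 - p) * z) ((1 - p) * x ^ (-p) * z) x := by
    have h := (Real.hasDerivAt_rpow_const (p := 1 - p) (Or.inl hx.ne')).mul_const z
    refine h.congr_deriv ?_
    rw [show (1:ℝ) - p - 1 = -p by ring]
  have hφs : HasDerivAt (fun t : ℝ => φ (t ^ (1 - p) * z))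
      ((φ s * (1 + φ s) / (s * (1 + (p - 1) * φ s))) * ((1 - p) * x ^ (-p) * z)) x :=
    hd.comp x hsx
  have h1 := hφs.const_mul ((p - 1) / p)
  have h2 := (hasDerivAt_const x (1:ℝ)).div (hφs.const_mul (p * (p - 1)))
    (by positivity)
  have hg := (h1.add_const ((2 - p) / (p * (p - 1)))).add h2
  have hprod := ((hasDerivAt_id x).mul_const z).mul hg
  have hxp : x ^ (-p : ℝ) * z = s / x := by
    rw [eq_div_iff hx.ne', hsdef, show (1:ℝ) - p = -p + 1 by ring, Real.rpow_add hx,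
      Real.rpow_one]; ring
  refine hprod.congr_deriv ?_
  have hs0 : s ≠ 0 := hs.ne'
  simp only [← hsdef, id, Pi.add_apply, Pi.div_apply]
  rw [show (1 - p) * x ^ (-p) * z = (1 - p) * (s / x) by rw [mul_assoc, hxp]]
  clear_value s
  field_simp
  ring

lemma derivZ (p : ℝ) (hp1 : 1 < p) (hp2 : p < 2) (φ : ℝ → ℝ)
    (hφpos : ∀ s, 0 < s → 0 < φ s)
    (hφ' : ∀ s, 0 < s →
      HasDerivAt φ (φ s * (1 + φ s) / (s * (1 + (p - 1) * φ s))) s)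
    (x : ℝ) (hx : 0 < x) (z : ℝ) (hz : 0 < z) :
    HasDerivAt (fun t => B p φ x t) (x * φ (x ^ (1 - p) * z)) z := by
  have hs : 0 < x ^ (1 - p) * z := mul_pos (Real.rpow_pos_of_pos hx _) hz
  set s : ℝ := x ^ (1 - p) * z with hsdef
  have hψ : 0 < φ s := hφpos s hs
  have hd := hφ' s hs
  have hp0 : p ≠ 0 := by linarith
  have hp1' : p - 1 ≠ 0 := by linarith
  have hden : 0 < 1 + (p - 1) * φ s := by nlinarith [hψ]
  have hsz : HasDerivAt (fun t : ℝ => x ^ (1 - p) * t) (x ^ (1 - p)) z := by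
    simpa using (hasDerivAt_id z).const_mul (x ^ (1 - p))
  have hφs : HasDerivAt (fun t : ℝ => φ (x ^ (1 - p) * t))
      ((φ s * (1 + φ s) / (s * (1 + (p - 1) * φ s))) * x ^ (1 - p)) z :=
    hd.comp z hsz
  have h1 := hφs.const_mul ((p - 1) / p)
  have h2 := (hasDerivAt_const z (1:ℝ)).div (hφs.const_mul (p * (p - 1)))
    (by positivity)
  have hg := (h1.add_const ((2 - p) / (p * (p - 1)))).add h2
  have hprod := ((hasDerivAt_id z).const_mul x).mul hg
  have hs0 : s ≠ 0 := hs.ne'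
  have hxp : x ^ ((1:ℝ) - p) = s / z := by rw [eq_div_iff hz.ne', hsdef]
  refine hprod.congr_deriv ?_
  simp only [← hsdef, id, Pi.add_apply, Pi.div_apply]
  rw [hxp]
  clear_value s
  field_simp
  ring

theorem stmt_13 (p : ℝ) (hp1 : 1 < p) (hp2 : p < 2) (φ : ℝ → ℝ)
    (hφpos : ∀ s, 0 < s → 0 < φ s)
    (hφ : ∀ s, 0 < s → φ s * (1 + φ s) ^ (p - 2) = p ^ (p - 2) * s)
    (hφ' : ∀ s, 0 < s →
      HasDerivAt φ (φ s * (1 + φ s) / (s * (1 + (p - 1) * φ s))) s) :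
    ∀ x z : ℝ, 0 < x → 0 < z →
      HasDerivAt (fun x' => deriv (fun t => B p φ t z) x')
        (x ^ (-p) * z ^ 2 * deriv φ (x ^ (1 - p) * z) / (φ (x ^ (1 - p) * z)) ^ 2) x ∧
      HasDerivAt (fun z' => deriv (fun t => B p φ x t) z')
        (x ^ (2 - p) * deriv φ (x ^ (1 - p) * z)) z ∧
      (x ^ (-p) * z ^ 2 * deriv φ (x ^ (1 - p) * z) / (φ (x ^ (1 - p) * z)) ^ 2) *
          (x ^ (2 - p) * deriv φ (x ^ (1 - p) * z))
        = (|(2 - p) * φ (x ^ (1 - p) * z) / (1 + (p - 1) * φ (x ^ (1 - p) * z))| + 1) ^ 2 := by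
  intro x z hx hz
  have hs : 0 < x ^ (1 - p) * z := mul_pos (Real.rpow_pos_of_pos hx _) hz
  set s : ℝ := x ^ (1 - p) * z with hsdef
  have hψ : 0 < φ s := hφpos s hs
  have hd := hφ' s hs
  have hp0 : p ≠ 0 := by linarith
  have hp1' : p - 1 ≠ 0 := by linarith
  have hden : 0 < 1 + (p - 1) * φ s := by nlinarith [hψ]
  have hdφ : HasDerivAt φ (deriv φ s) s := hd.differentiableAt.hasDerivAt
  have hsx : HasDerivAt (fun t : ℝ => t ^ (1 - p) * z) ((1 - p) * x ^ (-p) * z) x := by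
    have h := (Real.hasDerivAt_rpow_const (p := 1 - p) (Or.inl hx.ne')).mul_const z
    refine h.congr_deriv ?_
    rw [show (1:ℝ) - p - 1 = -p by ring]
  have hφsx : HasDerivAt (fun x' : ℝ => φ (x' ^ (1 - p) * z))
      (deriv φ s * ((1 - p) * x ^ (-p) * z)) x := hdφ.comp x hsx
  refine ⟨?_, ?_, ?_⟩
  · -- B_xx
    have hN := ((hφsx.const_mul (2 - p)).add_const 1).const_mul z
    have hM := hφsx.const_mul (p - 1)
    have hD := hN.div hM (by simp only [← hsdef]; positivity)
    have hD' : HasDerivAt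
        (fun x' => z * ((2 - p) * φ (x' ^ (1 - p) * z) + 1) / ((p - 1) * φ (x' ^ (1 - p) * z)))
        (x ^ (-p) * z ^ 2 * deriv φ s / (φ s) ^ 2) x := by
      refine hD.congr_deriv ?_
      simp only [← hsdef]
      field_simp
      ring
    refine hD'.congr_of_eventuallyEq ?_
    filter_upwards [eventually_gt_nhds hx] with y hy
    exact (derivX p hp1 hp2 φ hφpos hφ' z hz y hy).deriv
  · -- B_zz
    have hsz : HasDerivAt (fun t : ℝ => x ^ (1 - p) * t) (x ^ (1 - p)) z := by
      simpa using (hasDerivAt_id z).const_mul (x ^ (1 - p))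
    have hD2 : HasDerivAt (fun z' : ℝ => x * φ (x ^ (1 - p) * z'))
        (x ^ (2 - p) * deriv φ s) z := by
      have h := (hdφ.comp z hsz).const_mul x
      refine h.congr_deriv ?_
      rw [show (2:ℝ) - p = 1 + (1 - p) by ring, Real.rpow_add hx, Real.rpow_one]
      ring
    refine hD2.congr_of_eventuallyEq ?_
    filter_upwards [eventually_gt_nhds hz] with y hy
    exact (derivZ p hp1 hp2 φ hφpos hφ' x hx y hy).deriv
  · -- discriminant identity
    rw [hd.deriv]
    have habs : |(2 - p) * φ s / (1 + (p - 1) * φ s)| = (2 - p) * φ s / (1 + (p - 1) * φ s) :=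
      abs_of_pos (div_pos (mul_pos (by linarith) hψ) hden)
    rw [habs]
    have key : x ^ (-p : ℝ) * x ^ ((2:ℝ) - p) = x ^ ((1:ℝ) - p) * x ^ ((1:ℝ) - p) := by
      rw [← Real.rpow_add hx, ← Real.rpow_add hx]
      ring_nf
    have hc : (0:ℝ) < x ^ ((2:ℝ) - p) := Real.rpow_pos_of_pos hx _
    have hb : x ^ (-p : ℝ) = s ^ 2 / (x ^ ((2:ℝ) - p) * z ^ 2) := by
      rw [eq_div_iff (by positivity), hsdef, mul_pow]
      rw [sq (x ^ ((1:ℝ) - p)), ← key]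
      ring
    rw [hb]
    have hs0 : s ≠ 0 := hs.ne'
    have hden' : 1 + (p - 1) * φ s ≠ 0 := hden.ne'
    have hden'' : 1 + φ s * (p - 1) ≠ 0 := by rw [mul_comm]; exact hden'
    field_simp
    ring
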